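/- For 2-by-2 Hermitian positive definite matrices A and B and any positive integer m, the polynomial p(t) = Tr[(A + tB)^m] has all coefficients positive. -/

import Mathlib

open Matrix Polynomial ComplexOrder

/-- Polynomials over ℝ with all coefficients nonnegative, as a subsemiring. -/
noncomputable def nnPoly : Subsemiring (Polynomial ℝ) where
  carrier := {p | ∀ n, 0 ≤ p.coeff n}
  zero_mem' := fun n => by simp
  one_mem' := fun n => by
    rw [Polynomial.coeff_one]; split <;> norm_num
  add_mem' := fun {p q} hp hq n => by
    rw [Polynomial.coeff_add]; exact add_nonneg (hp n) (hq n)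
  mul_mem' := fun {p q} hp hq n => by
    rw [Polynomial.coeff_mul]
    exact Finset.sum_nonneg fun x _ => mul_nonneg (hp x.1) (hq x.2)

lemma nn_entries (M : Matrix (Fin 2) (Fin 2) (Polynomial ℝ))
    (hM : ∀ i j, M i j ∈ nnPoly) : ∀ k, ∀ i j, (M ^ k) i j ∈ nnPoly := by
  intro k
  induction k with
  | zero =>
      intro i j
      rw [pow_zero]
      intro n
      rw [Matrix.one_apply]
      split <;> [exact nnPoly.one_mem n; exact nnPoly.zero_mem n]
  | succ k ih =>
      intro i j
      rw [pow_succ, Matrix.mul_apply]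
      exact Subsemiring.sum_mem _ fun c _ => mul_mem (ih i c) (hM c j)

lemma nn_diag (M : Matrix (Fin 2) (Fin 2) (Polynomial ℝ))
    (hM : ∀ i j, M i j ∈ nnPoly) :
    ∀ k, ∃ s ∈ nnPoly, (M ^ k) 0 0 = (M 0 0) ^ k + s := by
  intro k
  induction k with
  | zero => exact ⟨0, nnPoly.zero_mem, by simp⟩
  | succ k ih =>
      obtain ⟨s, hs, hsk⟩ := ih
      refine ⟨s * M 0 0 + (M ^ k) 0 1 * M 1 0,
        add_mem (mul_mem hs (hM 0 0)) (mul_mem (nn_entries M hM k 0 1) (hM 1 0)), ?_⟩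
      rw [pow_succ, Matrix.mul_apply, Fin.sum_univ_two, hsk, pow_succ]
      ring

lemma pos_coeff_pow (d b : ℝ) (hd : 0 < d) (hb : 0 < b) :
    ∀ k, ∀ j ≤ k, 0 < ((C d + C b * X : Polynomial ℝ) ^ k).coeff j := by
  have hnn : (C d + C b * X : Polynomial ℝ) ∈ nnPoly := by
    intro n
    rw [Polynomial.coeff_add, Polynomial.coeff_C, Polynomial.coeff_C_mul, Polynomial.coeff_X]
    split <;> split <;> simp_all <;> linarith
  intro k
  induction k with
  | zero =>
      intro j hj
      interval_cases j
      simp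
  | succ k ih =>
      intro j hj
      rw [pow_succ, mul_add, ← mul_assoc, Polynomial.coeff_add, Polynomial.coeff_mul_C]
      match j with
      | 0 =>
          rw [Polynomial.coeff_mul_X_zero]
          have := ih 0 (Nat.zero_le _)
          nlinarith
      | j + 1 =>
          rw [Polynomial.coeff_mul_X, Polynomial.coeff_mul_C]
          have h1 : 0 ≤ ((C d + C b * X : Polynomial ℝ) ^ k).coeff (j + 1) :=
            pow_mem hnn k (j + 1)
          have h2 : 0 < ((C d + C b * X : Polynomial ℝ) ^ k).coeff j :=
            ih j (Nat.lt_succ_iff.mp hj)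
          nlinarith

/-- Key real lemma. -/
lemma real_key (Dr Br : Matrix (Fin 2) (Fin 2) ℝ)
    (hD : ∀ i j, 0 ≤ Dr i j) (hB : ∀ i j, 0 ≤ Br i j)
    (hD0 : 0 < Dr 0 0) (hB0 : 0 < Br 0 0) (m i : ℕ) (him : i ≤ m) :
    0 < (((Dr.map C + (X : Polynomial ℝ) • Br.map C) ^ m).trace.coeff i) := by
  set M : Matrix (Fin 2) (Fin 2) (Polynomial ℝ) := Dr.map C + (X : Polynomial ℝ) • Br.map C
    with hMdef
  have hent : ∀ a c, M a c = C (Dr a c) + C (Br a c) * X := by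
    intro a c
    simp only [hMdef, Matrix.add_apply, Matrix.smul_apply, Matrix.map_apply, smul_eq_mul]
    ring
  have hMnn : ∀ a c, M a c ∈ nnPoly := by
    intro a c n
    rw [hent a c, Polynomial.coeff_add, Polynomial.coeff_C, Polynomial.coeff_C_mul,
      Polynomial.coeff_X]
    have := hD a c; have := hB a c
    split <;> split <;> simp_all
  obtain ⟨s, hs, hsk⟩ := nn_diag M hMnn m
  have htr : (M ^ m).trace = (M 0 0) ^ m + (s + (M ^ m) 1 1) := by
    rw [Matrix.trace_fin_two, hsk]; ring
  rw [htr, Polynomial.coeff_add]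
  have h1 : 0 < ((M 0 0) ^ m).coeff i := by
    rw [hent 0 0]; exact pos_coeff_pow _ _ hD0 hB0 m i him
  have h2 : 0 ≤ (s + (M ^ m) 1 1).coeff i :=
    (add_mem hs (nn_entries M hMnn m 1 1)) i
  linarith

lemma conj_trace_eq (W A B D B2 : Matrix (Fin 2) (Fin 2) ℂ)
    (hWW : W * star W = 1) (hW'W : star W * W = 1)
    (hA : A = W * D * star W) (hB : B = W * B2 * star W) (m : ℕ) :
    ((A.map Polynomial.C + (X : Polynomial ℂ) • B.map Polynomial.C) ^ m).trace
      = ((D.map Polynomial.C + (X : Polynomial ℂ) • B2.map Polynomial.C) ^ m).trace := by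
  have hone : (W.map (Polynomial.C : ℂ → Polynomial ℂ)) * ((star W).map Polynomial.C) = 1 := by
    rw [← Matrix.map_mul, hWW, Matrix.map_one _ (map_zero Polynomial.C) (map_one Polynomial.C)]
  have hone' : ((star W).map (Polynomial.C : ℂ → Polynomial ℂ)) * (W.map Polynomial.C) = 1 := by
    rw [← Matrix.map_mul, hW'W, Matrix.map_one _ (map_zero Polynomial.C) (map_one Polynomial.C)]
  set u : (Matrix (Fin 2) (Fin 2) (Polynomial ℂ))ˣ :=
    ⟨W.map Polynomial.C, (star W).map Polynomial.C, hone, hone'⟩ with hu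
  have key : A.map Polynomial.C + (X : Polynomial ℂ) • B.map Polynomial.C
      = (u : Matrix (Fin 2) (Fin 2) (Polynomial ℂ))
        * (D.map Polynomial.C + (X : Polynomial ℂ) • B2.map Polynomial.C)
        * (↑u⁻¹ : Matrix (Fin 2) (Fin 2) (Polynomial ℂ)) := by
    rw [hA, hB]
    simp only [hu, Units.inv_mk]
    simp only [Matrix.map_mul, mul_add, add_mul, mul_smul_comm, smul_mul_assoc,
      Matrix.mul_assoc]
  rw [key, Units.conj_pow, Matrix.trace_mul_cycle, Units.inv_mul, Matrix.one_mul]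

lemma trace_map_poly (N : Matrix (Fin 2) (Fin 2) (Polynomial ℝ)) :
    (N.map (Polynomial.map (Complex.ofRealHom))).trace
      = (N.trace).map (Complex.ofRealHom) := by
  simp [Matrix.trace, Matrix.map_apply, Polynomial.map_add, Matrix.diag]

/-- For 2-by-2 Hermitian positive definite `A`, `B` and any positive integer `m`,
the polynomial `p(t) = Tr[(A + tB)^m]` has all coefficients positive (real). -/
theorem trace_pow_poly_pos_coeffs (A B : Matrix (Fin 2) (Fin 2) ℂ)
    (hA : A.PosDef) (hB : B.PosDef) (m : ℕ) (hm : 0 < m) :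
    ∀ i ≤ m,
      (((A.map Polynomial.C + (Polynomial.X : Polynomial ℂ) • B.map Polynomial.C) ^ m).trace.coeff i).im = 0 ∧
      0 < (((A.map Polynomial.C + (Polynomial.X : Polynomial ℂ) • B.map Polynomial.C) ^ m).trace.coeff i).re := by
  intro i him
  -- spectral data for A
  have hAh : A.IsHermitian := hA.1
  set U0 : Matrix (Fin 2) (Fin 2) ℂ := (hAh.eigenvectorUnitary : Matrix (Fin 2) (Fin 2) ℂ) with hU0
  have hU0mem : U0 ∈ Matrix.unitaryGroup (Fin 2) ℂ := hAh.eigenvectorUnitary.2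
  have hU0r : U0 * star U0 = 1 := (Matrix.mem_unitaryGroup_iff).mp hU0mem
  have hU0l : star U0 * U0 = 1 := (Matrix.mem_unitaryGroup_iff').mp hU0mem
  set Dc : Matrix (Fin 2) (Fin 2) ℂ :=
    Matrix.diagonal (RCLike.ofReal ∘ hAh.eigenvalues) with hDc
  have hspec : A = U0 * Dc * star U0 := hAh.spectral_theorem
  -- phase
  set B1 : Matrix (Fin 2) (Fin 2) ℂ := star U0 * B * U0 with hB1
  set z : ℂ := B1 0 1 with hz
  set v : ℂ := if z = 0 then 1 else (starRingEnd ℂ) z / ‖z‖ with hv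
  have hvz : z * v = (‖z‖ : ℂ) := by
    rw [hv]
    split
    · rename_i h
      rw [h, zero_mul, norm_zero, Complex.ofReal_zero]
    · rename_i h
      have habs : (‖z‖ : ℂ) ≠ 0 := by
        simpa [Complex.ofReal_ne_zero] using (norm_ne_zero_iff.mpr h)
      have h1 : z * (starRingEnd ℂ) z = (‖z‖ : ℂ) ^ 2 := by
        rw [Complex.mul_conj, Complex.normSq_eq_norm_sq]; push_cast; ring
      rw [div_eq_mul_inv, ← mul_assoc, h1, sq, mul_inv_cancel_right₀ habs]
  have hvv : v * (starRingEnd ℂ) v = 1 := by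
    rw [hv]
    split
    · simp
    · rename_i h
      have habs : (‖z‖ : ℂ) ≠ 0 := by
        simpa [Complex.ofReal_ne_zero] using (norm_ne_zero_iff.mpr h)
      have h1 : z * (starRingEnd ℂ) z = (‖z‖ : ℂ) ^ 2 := by
        rw [Complex.mul_conj, Complex.normSq_eq_norm_sq]; push_cast; ring
      rw [map_div₀]
      simp only [Complex.conj_conj, Complex.conj_ofReal]
      rw [div_mul_div_comm, mul_comm ((starRingEnd ℂ) z) z, h1, ← sq,
        div_self (pow_ne_zero 2 habs)]
  have hvvu : ∀ j : Fin 2, (![1, v] : Fin 2 → ℂ) j * star ((![1, v] : Fin 2 → ℂ) j) = 1 := by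
    intro j
    fin_cases j
    · show (1 : ℂ) * star 1 = 1
      rw [star_one, mul_one]
    · show v * star v = 1
      rw [Complex.star_def]
      exact hvv
  set vv : Fin 2 → ℂ := ![1, v] with hvvdef
  set V : Matrix (Fin 2) (Fin 2) ℂ := Matrix.diagonal vv with hVdef
  have hstarV : star V = Matrix.diagonal (star vv) := by
    rw [hVdef, Matrix.star_eq_conjTranspose, Matrix.diagonal_conjTranspose]
  have hvv1 : vv * star vv = 1 := by
    funext j
    simpa only [Pi.mul_apply, Pi.star_apply, Pi.one_apply] using hvvu j
  have hVV : V * star V = 1 := by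
    rw [hVdef, hstarV, Matrix.diagonal_mul_diagonal,
      show (fun i => vv i * star vv i) = fun _ => (1 : ℂ) from funext fun j => hvvu j]
    exact Matrix.diagonal_one
  have hV'V : star V * V = 1 := by
    rw [hVdef, hstarV, Matrix.diagonal_mul_diagonal,
      show (fun i => star vv i * vv i) = fun _ => (1 : ℂ) from
        funext fun j => by rw [mul_comm]; exact hvvu j]
    exact Matrix.diagonal_one
  set W : Matrix (Fin 2) (Fin 2) ℂ := U0 * V with hWdef
  have hstarW : star W = star V * star U0 := by rw [hWdef, Matrix.star_mul]
  have hWW : W * star W = 1 := by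
    rw [hWdef, hstarW, Matrix.mul_assoc, ← Matrix.mul_assoc V, hVV, Matrix.one_mul, hU0r]
  have hW'W : star W * W = 1 := by
    rw [hWdef, hstarW, Matrix.mul_assoc, ← Matrix.mul_assoc (star U0), hU0l, Matrix.one_mul, hV'V]
  set B2 : Matrix (Fin 2) (Fin 2) ℂ := star W * B * W with hB2def
  have hBW : B = W * B2 * star W := by
    rw [hB2def]
    calc B = (W * star W) * B * (W * star W) := by rw [hWW, Matrix.one_mul, Matrix.mul_one]
      _ = W * (star W * B * W) * star W := by simp only [Matrix.mul_assoc]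
  have hVDc : V * Dc * star V = Dc := by
    rw [hVdef, hstarV, hDc, Matrix.diagonal_mul_diagonal, Matrix.diagonal_mul_diagonal]
    have hfun : (fun j => vv j * (RCLike.ofReal ∘ hAh.eigenvalues) j * star vv j)
        = (RCLike.ofReal ∘ hAh.eigenvalues : Fin 2 → ℂ) := by
      funext j
      have h := hvvu j
      simp only [Pi.star_apply, Function.comp_apply]
      calc vv j * (RCLike.ofReal (hAh.eigenvalues j) : ℂ) * star (vv j)
          = (RCLike.ofReal (hAh.eigenvalues j) : ℂ) * (vv j * star (vv j)) := by ring
        _ = (RCLike.ofReal (hAh.eigenvalues j) : ℂ) := by rw [h, mul_one]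
    rw [hfun]
  have hAW : A = W * Dc * star W := by
    have h2 : W * Dc * star W = U0 * (V * Dc * star V) * star U0 := by
      rw [hWdef, hstarW]
      simp only [Matrix.mul_assoc]
    rw [h2, hVDc, ← hspec]
  -- entries of B2
  have hB2alt : B2 = star V * B1 * V := by
    rw [hB2def, hB1, hstarW, hWdef]
    simp only [Matrix.mul_assoc]
  have hB2ent : ∀ a b, B2 a b = star (vv a) * (B1 a b) * vv b := by
    intro a b
    rw [hB2alt, hstarV, Matrix.mul_diagonal, Matrix.diagonal_mul]
    rfl
  have hvv0 : vv 0 = 1 := rfl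
  have hvv1' : vv 1 = v := rfl
  have hB2_01 : B2 0 1 = (‖z‖ : ℂ) := by
    rw [hB2ent 0 1, hvv0, hvv1', star_one, one_mul, ← hz, hvz]
  have hBst : star B = B := by
    rw [Matrix.star_eq_conjTranspose]; exact hB.1
  have hB2herm : B2.IsHermitian := by
    show B2ᴴ = B2
    rw [← Matrix.star_eq_conjTranspose, hB2def]
    calc star (star W * B * W) = star W * (star B * W) := by
          simp only [Matrix.star_mul, star_star, Matrix.mul_assoc]
      _ = star W * B * W := by rw [hBst, Matrix.mul_assoc]
  have hB2_10 : B2 1 0 = (‖z‖ : ℂ) := by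
    rw [← hB2herm.apply 1 0, hB2_01, Complex.star_def, Complex.conj_ofReal]
  have hB2diag : ∀ a : Fin 2, 0 < B2 a a := by
    intro a
    set x : Fin 2 → ℂ := fun k => W k a with hx
    have hxne : x ≠ 0 := by
      intro h0
      have h1 : (star W * W) a a = 1 := by rw [hW'W, Matrix.one_apply_eq]
      rw [Matrix.mul_apply] at h1
      have h2 : (1 : ℂ) = 0 := by
        rw [← h1]
        apply Finset.sum_eq_zero
        intro k _
        have hk : W k a = 0 := congrFun h0 k
        rw [hk, mul_zero]
      exact one_ne_zero h2
    have hdot : dotProduct (star x) (B *ᵥ x) = B2 a a := by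
      rw [hB2def]
      simp only [Matrix.mul_apply, Matrix.mulVec, dotProduct, Pi.star_apply,
        Matrix.star_apply, hx, Finset.sum_mul, Finset.mul_sum]
      rw [Finset.sum_comm]
      apply Finset.sum_congr rfl
      intro k _
      apply Finset.sum_congr rfl
      intro l _
      ring
    have hp := (Matrix.posDef_iff_dotProduct_mulVec.mp hB).2 hxne
    rwa [hdot] at hp
  have hB2diag' : ∀ a : Fin 2, 0 < (B2 a a).re ∧ (B2 a a).im = 0 := by
    intro a
    have h := hB2diag a
    rw [Complex.lt_def] at h
    exact ⟨by simpa using h.1, by simpa using h.2.symm⟩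
  -- real matrices
  set Dr : Matrix (Fin 2) (Fin 2) ℝ := Matrix.diagonal hAh.eigenvalues with hDr
  set Br : Matrix (Fin 2) (Fin 2) ℝ := Matrix.of (fun a b => (B2 a b).re) with hBr
  have hDcDr : Dc = Dr.map (Complex.ofRealHom) := by
    rw [hDc, hDr, Matrix.diagonal_map (by simp)]
    congr 1
  have hB2im : ∀ a b, (B2 a b).im = 0 := by
    intro a b
    fin_cases a <;> fin_cases b
    · exact (hB2diag' 0).2
    · show (B2 0 1).im = 0
      rw [hB2_01]; simp
    · show (B2 1 0).im = 0
      rw [hB2_10]; simp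
    · exact (hB2diag' 1).2
  have hB2Br : B2 = Br.map (Complex.ofRealHom) := by
    ext a b
    simp only [hBr, Matrix.map_apply, Matrix.of_apply, Complex.ofRealHom_eq_coe]
    apply Complex.ext
    · simp
    · simp [hB2im a b]
  have hBrnn : ∀ a b, 0 ≤ Br a b := by
    intro a b
    fin_cases a <;> fin_cases b
    · exact le_of_lt (hB2diag' 0).1
    · show 0 ≤ (B2 0 1).re
      rw [hB2_01]; simp [norm_nonneg]
    · show 0 ≤ (B2 1 0).re
      rw [hB2_10]; simp [norm_nonneg]
    · exact le_of_lt (hB2diag' 1).1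
  have hDrnn : ∀ a b, 0 ≤ Dr a b := by
    intro a b
    rw [hDr]
    rcases eq_or_ne a b with h | h
    · subst h
      rw [Matrix.diagonal_apply_eq]
      exact le_of_lt (hA.eigenvalues_pos a)
    · rw [Matrix.diagonal_apply_ne _ h]
  have hDr00 : 0 < Dr 0 0 := by
    rw [hDr, Matrix.diagonal_apply_eq]
    exact hA.eigenvalues_pos 0
  have hBr00 : 0 < Br 0 0 := (hB2diag' 0).1
  -- assemble
  have htr := conj_trace_eq W A B Dc B2 hWW hW'W hAW hBW m
  set ψ : Polynomial ℝ →+* Polynomial ℂ := Polynomial.mapRingHom Complex.ofRealHom with hψ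
  set N : Matrix (Fin 2) (Fin 2) (Polynomial ℝ) :=
    Dr.map Polynomial.C + (X : Polynomial ℝ) • Br.map Polynomial.C with hN
  have hmapN : Dc.map Polynomial.C + (X : Polynomial ℂ) • B2.map Polynomial.C
      = N.map (Polynomial.map Complex.ofRealHom) := by
    rw [hDcDr, hB2Br, hN]
    ext a b
    simp only [Matrix.map_apply, Matrix.add_apply, Matrix.smul_apply, smul_eq_mul,
      Polynomial.map_add, Polynomial.map_mul, Polynomial.map_C, Polynomial.map_X,
      Complex.ofRealHom_eq_coe]
  have hpowN : (N.map (Polynomial.map Complex.ofRealHom)) ^ m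
      = (N ^ m).map (Polynomial.map Complex.ofRealHom) := by
    have h := map_pow (ψ.mapMatrix) N m
    simp only [RingHom.mapMatrix_apply, hψ, Polynomial.coe_mapRingHom] at h
    exact h.symm
  have htr2 : ((Dc.map Polynomial.C + (X : Polynomial ℂ) • B2.map Polynomial.C) ^ m).trace
      = ((N ^ m).trace).map Complex.ofRealHom := by
    rw [hmapN, hpowN, trace_map_poly]
  have hreal := real_key Dr Br hDrnn hBrnn hDr00 hBr00 m i him
  rw [htr, htr2, Polynomial.coeff_map]
  constructor
  · simp
  · simpa using hreal
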